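/- A set S ⊆ ℝⁿ is positively invariant under the flow φ if and only if both Exit_f(S) = ∅ and Exit_{−f}(Sᶜ) = ∅. -/
import Mathlib


def ExitSet {α : Type*} (φ : ℝ → α → α) (S : Set α) : Set α :=
  {x | x ∈ S ∧ ∀ t > (0:ℝ), ∃ s ∈ Set.Ioo (0:ℝ) t, φ s x ∉ S}

/-- Exit set with respect to the time-reversed flow. -/
def ExitSetRev {α : Type*} (φ : ℝ → α → α) (S : Set α) : Set α :=
  {x | x ∈ S ∧ ∀ t > (0:ℝ), ∃ s ∈ Set.Ioo (0:ℝ) t, φ (-s) x ∉ S}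

theorem pos_invariant_iff_exit_sets_empty {n : ℕ}
    (φ : ℝ → (Fin n → ℝ) → (Fin n → ℝ))
    (hφ0 : ∀ x, φ 0 x = x)
    (hgrp : ∀ t s x, φ (t + s) x = φ t (φ s x))
    (hcont : ∀ x, Continuous fun t => φ t x)
    (S : Set (Fin n → ℝ)) :
    (∀ x ∈ S, ∀ t : ℝ, 0 ≤ t → φ t x ∈ S) ↔
      (ExitSet φ S = ∅ ∧ ExitSetRev φ Sᶜ = ∅) := by
  constructor
  · intro hinv
    constructor
    · ext x
      simp only [Set.mem_empty_iff_false, iff_false, ExitSet, Set.mem_setOf_eq, not_and]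
      intro hxS h
      obtain ⟨s, hs, hns⟩ := h 1 one_pos
      exact hns (hinv x hxS s hs.1.le)
    · ext x
      simp only [Set.mem_empty_iff_false, iff_false, ExitSetRev, Set.mem_setOf_eq, not_and]
      intro hxS h
      obtain ⟨s, hs, hns⟩ := h 1 one_pos
      apply hxS
      have h1 : φ (-s) x ∈ S := by simpa using hns
      have h2 := hinv _ h1 s hs.1.le
      rwa [← hgrp, add_neg_cancel, hφ0] at h2
  · rintro ⟨hE, hR⟩ x hx t ht
    by_contra hnot
    set B : Set ℝ := {u | u ∈ Set.Icc 0 t ∧ ∀ s ∈ Set.Icc 0 u, φ s x ∈ S} with hB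
    have h0B : (0:ℝ) ∈ B := ⟨⟨le_refl 0, ht⟩, fun s hs => by
      have hs0 : s = 0 := le_antisymm hs.2 hs.1
      rw [hs0, hφ0]; exact hx⟩
    have hbdd : BddAbove B := ⟨t, fun u hu => hu.1.2⟩
    set τ := sSup B with hτ
    have hτ0 : 0 ≤ τ := le_csSup hbdd h0B
    have hτt : τ ≤ t := csSup_le ⟨0, h0B⟩ fun u hu => hu.1.2
    have hbelow : ∀ s, 0 ≤ s → s < τ → φ s x ∈ S := by
      intro s hs0 hsτ
      obtain ⟨u, huB, hsu⟩ := exists_lt_of_lt_csSup ⟨0, h0B⟩ hsτ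
      exact huB.2 s ⟨hs0, hsu.le⟩
    by_cases hcase : φ τ x ∈ S
    · have hτlt : τ < t := lt_of_le_of_ne hτt (fun h => hnot (h ▸ hcase))
      have hmemB : τ ∈ B := ⟨⟨hτ0, hτt⟩, fun s hs =>
        (lt_or_eq_of_le hs.2).elim (hbelow s hs.1) (fun h => h ▸ hcase)⟩
      have hnE : φ τ x ∉ ExitSet φ S := by rw [hE]; exact Set.notMem_empty _
      simp only [ExitSet, Set.mem_setOf_eq, not_and] at hnE
      push_neg at hnE
      obtain ⟨u, hu, hgood⟩ := hnE hcase
      set ε := min u (t - τ) / 2 with hε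
      have hεpos : 0 < ε := half_pos (lt_min hu (sub_pos.mpr hτlt))
      have hεu : ε < u := by
        have := min_le_left u (t - τ); rw [hε]; linarith
      have hεt : τ + ε ≤ t := by
        have := min_le_right u (t - τ); rw [hε]; linarith
      have hmem2 : τ + ε ∈ B := by
        refine ⟨⟨by linarith, hεt⟩, fun s hs => ?_⟩
        rcases le_or_gt s τ with h | h
        · exact hmemB.2 s ⟨hs.1, h⟩
        · have heq : φ s x = φ (s - τ) (φ τ x) := by
            rw [← hgrp, sub_add_cancel]
          rw [heq]
          exact hgood (s - τ) ⟨by linarith, by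
            have := hs.2; linarith⟩
      have : τ + ε ≤ τ := le_csSup hbdd hmem2
      linarith
    · have hτpos : 0 < τ := by
        rcases lt_or_eq_of_le hτ0 with h | h
        · exact h
        · exfalso; apply hcase; rw [← h, hφ0]; exact hx
      have hnR : φ τ x ∉ ExitSetRev φ Sᶜ := by rw [hR]; exact Set.notMem_empty _
      simp only [ExitSetRev, Set.mem_setOf_eq, not_and] at hnR
      push_neg at hnR
      obtain ⟨u, hu, hgood⟩ := hnR hcase
      set s := min u τ / 2 with hs
      have hspos : 0 < s := half_pos (lt_min hu hτpos)
      have hsu : s < u := by have := min_le_left u τ; rw [hs]; linarith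
      have hsτ : s < τ := by have := min_le_right u τ; rw [hs]; linarith
      have h1 : φ (-s) (φ τ x) ∈ Sᶜ := hgood s ⟨hspos, hsu⟩
      have heq : φ (-s) (φ τ x) = φ (τ - s) x := by
        rw [← hgrp]; ring_nf
      rw [heq] at h1
      exact h1 (hbelow (τ - s) (by linarith) (by linarith))
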